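/- An isotropic tensor function Φ: M → Sym(n) is bi-coaxial if and only if for every X ∈ M with eigenvalues a₁,…,aₙ and corresponding eigenvalues b₁,…,bₙ of Φ(X): aᵢ ≠ aⱼ implies bᵢ ≠ bⱼ for all i, j. -/

import Mathlib

open Matrix

def IsEigenvector {n : ℕ} (A : Matrix (Fin n) (Fin n) ℝ) (v : Fin n → ℝ) : Prop :=
  v ≠ 0 ∧ ∃ μ : ℝ, A.mulVec v = μ • v

/-- `A` is coaxial to `B`: every eigenvector of `A` is an eigenvector of `B`. -/
def Coaxial {n : ℕ} (A B : Matrix (Fin n) (Fin n) ℝ) : Prop :=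
  ∀ v : Fin n → ℝ, IsEigenvector A v → IsEigenvector B v

/-- A matrix is orthogonal. -/
def IsOrthogonal {n : ℕ} (Q : Matrix (Fin n) (Fin n) ℝ) : Prop :=
  Q * Qᵀ = 1 ∧ Qᵀ * Q = 1

namespace BicoaxialAux

variable {n : ℕ}

lemma isOrth_transpose {Q : Matrix (Fin n) (Fin n) ℝ} (h : IsOrthogonal Q) : IsOrthogonal Qᵀ :=
  ⟨by simpa using h.2, by simpa using h.1⟩

lemma sandwich {Q : Matrix (Fin n) (Fin n) ℝ} (h : IsOrthogonal Q) (D : Matrix (Fin n) (Fin n) ℝ) :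
    Q * (Qᵀ * D * Q) * Qᵀ = D := by
  calc Q * (Qᵀ * D * Q) * Qᵀ = (Q * Qᵀ) * D * (Q * Qᵀ) := by noncomm_ring
  _ = D := by rw [h.1]; simp

lemma sandwich' {Q : Matrix (Fin n) (Fin n) ℝ} (h : IsOrthogonal Q) (D : Matrix (Fin n) (Fin n) ℝ) :
    Qᵀ * (Q * D * Qᵀ) * Q = D := by
  calc Qᵀ * (Q * D * Qᵀ) * Q = (Qᵀ * Q) * D * (Qᵀ * Q) := by noncomm_ring
  _ = D := by rw [h.2]; simp

lemma swap_orth (i j : Fin n) :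
    IsOrthogonal ((1 : Matrix (Fin n) (Fin n) ℝ).submatrix (Equiv.swap i j) id) := by
  constructor
  · rw [transpose_submatrix, transpose_one, ← Equiv.coe_refl, mul_submatrix_one]
    simp [Matrix.submatrix_submatrix]
  · rw [transpose_submatrix, transpose_one, one_submatrix_mul (e₂ := Equiv.swap i j)]
    simp only [Matrix.submatrix_submatrix, Function.comp_id, Function.id_comp]
    rw [Equiv.self_comp_symm]
    exact Matrix.submatrix_id_id 1

lemma swap_conj (i j : Fin n) (b : Fin n → ℝ) :
    ((1 : Matrix (Fin n) (Fin n) ℝ).submatrix (Equiv.swap i j) id)ᵀ * Matrix.diagonal b *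
      ((1 : Matrix (Fin n) (Fin n) ℝ).submatrix (Equiv.swap i j) id)
      = Matrix.diagonal (b ∘ (Equiv.swap i j)) := by
  rw [transpose_submatrix, transpose_one, one_submatrix_mul (e₂ := Equiv.swap i j),
    mul_submatrix_one (e₁ := Equiv.swap i j)]
  simp only [Matrix.submatrix_submatrix, Equiv.symm_swap, Function.comp_id, Function.id_comp]
  rw [Matrix.submatrix_diagonal_equiv]

lemma swap_diag (i j : Fin n) (a : Fin n → ℝ) (hij : a i = a j) :
    ((1 : Matrix (Fin n) (Fin n) ℝ).submatrix (Equiv.swap i j) id)ᵀ * Matrix.diagonal a *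
      ((1 : Matrix (Fin n) (Fin n) ℝ).submatrix (Equiv.swap i j) id) = Matrix.diagonal a := by
  rw [swap_conj]
  have : a ∘ ⇑(Equiv.swap i j) = a := by
    funext k
    show a (Equiv.swap i j k) = a k
    by_cases h1 : k = i
    · simp [h1, Equiv.swap_apply_left, hij.symm]
    by_cases h2 : k = j
    · simp [h2, Equiv.swap_apply_right, hij]
    · simp [Equiv.swap_apply_of_ne_of_ne h1 h2]
  rw [this]

lemma spectral {X : Matrix (Fin n) (Fin n) ℝ} (hX : X.IsSymm) :
    ∃ (Q : Matrix (Fin n) (Fin n) ℝ) (a : Fin n → ℝ),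
      IsOrthogonal Q ∧ X = Qᵀ * Matrix.diagonal a * Q := by
  have hH : X.IsHermitian := by
    rwa [Matrix.IsHermitian, Matrix.conjTranspose_eq_transpose_of_trivial]
  set U : Matrix (Fin n) (Fin n) ℝ :=
    (Matrix.IsHermitian.eigenvectorUnitary hH : Matrix (Fin n) (Fin n) ℝ)
  refine ⟨star U, hH.eigenvalues, ?_, ?_⟩
  · constructor
    · simpa [Matrix.star_eq_conjTranspose] using
        (Matrix.mem_unitaryGroup_iff'.mp (Matrix.IsHermitian.eigenvectorUnitary hH).2)
    · simpa [Matrix.star_eq_conjTranspose, Matrix.conjTranspose_eq_transpose_of_trivial] using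
        (Matrix.mem_unitaryGroup_iff.mp (Matrix.IsHermitian.eigenvectorUnitary hH).2)
  · have h := hH.spectral_theorem
    have h2 : (star U)ᵀ = U := by
      rw [Matrix.star_eq_conjTranspose, Matrix.conjTranspose_eq_transpose_of_trivial,
        Matrix.transpose_transpose]
    rw [h2]
    convert h using 2
    rw [Unitary.conjStarAlgAut_apply]; rfl

def signM (i : Fin n) : Matrix (Fin n) (Fin n) ℝ :=
  Matrix.diagonal (fun k => if k = i then (-1:ℝ) else 1)

lemma signM_orth (i : Fin n) : IsOrthogonal (signM i) := by
  have h : (signM i) * (signM i) = 1 := by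
    rw [signM, Matrix.diagonal_mul_diagonal]
    rw [show (fun k : Fin n => (if k = i then (-1:ℝ) else 1) * (if k = i then (-1:ℝ) else 1))
      = fun _ => (1:ℝ) from by funext k; split_ifs <;> norm_num]
    exact Matrix.diagonal_one
  constructor <;> simp [signM, Matrix.diagonal_transpose] <;>
    simpa [signM] using h

lemma signM_conj_diag (i : Fin n) (a : Fin n → ℝ) :
    (signM i)ᵀ * Matrix.diagonal a * signM i = Matrix.diagonal a := by
  rw [signM, Matrix.diagonal_transpose, Matrix.diagonal_mul_diagonal,
    Matrix.diagonal_mul_diagonal]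
  have : (fun k : Fin n =>
      (if k = i then (-1:ℝ) else 1) * a k * (if k = i then (-1:ℝ) else 1)) = a := by
    funext k; split_ifs <;> ring
  rw [this]

lemma diag_of_sign_conj (C : Matrix (Fin n) (Fin n) ℝ)
    (h : ∀ i : Fin n, (signM i)ᵀ * C * signM i = C) :
    C = Matrix.diagonal (fun k => C k k) := by
  ext p q
  by_cases hpq : p = q
  · subst hpq; simp
  · have := congrFun (congrFun (h p) p) q
    rw [signM, Matrix.diagonal_transpose] at this
    have hC : ((Matrix.diagonal (fun k => if k = p then (-1:ℝ) else 1) * C) *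
        Matrix.diagonal (fun k => if k = p then (-1:ℝ) else 1)) p q
        = - C p q := by
      rw [Matrix.mul_diagonal, Matrix.diagonal_mul]
      simp [hpq, Ne.symm hpq]
    rw [show (Matrix.diagonal (fun k => if k = p then (-1:ℝ) else 1) * C *
        Matrix.diagonal (fun k => if k = p then (-1:ℝ) else 1)) p q = _ from hC] at this
    have : C p q = 0 := by linarith
    simp [Matrix.diagonal_apply_ne _ hpq, this]

lemma coax_of_diag {Q : Matrix (Fin n) (Fin n) ℝ} (hQ : IsOrthogonal Q)
    {A B : Matrix (Fin n) (Fin n) ℝ} {c d : Fin n → ℝ}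
    (hA : A = Qᵀ * Matrix.diagonal c * Q) (hB : B = Qᵀ * Matrix.diagonal d * Q)
    (h : ∀ k l, c k = c l → d k = d l) : Coaxial A B := by
  rintro v ⟨hv0, μ, hμ⟩
  set w := Q *ᵥ v with hw
  have hwv : Qᵀ *ᵥ w = v := by rw [hw, mulVec_mulVec, hQ.2, one_mulVec]
  have hw0 : w ≠ 0 := by
    intro hz; rw [hz, mulVec_zero] at hwv; exact hv0 hwv.symm
  have hmul : Q * A = Matrix.diagonal c * Q := by
    rw [hA]
    calc Q * (Qᵀ * Matrix.diagonal c * Q)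
        = (Q * Qᵀ) * (Matrix.diagonal c * Q) := by noncomm_ring
    _ = Matrix.diagonal c * Q := by rw [hQ.1, one_mul]
  have hDw : Matrix.diagonal c *ᵥ w = μ • w := by
    have h1 : Q *ᵥ (A *ᵥ v) = μ • w := by rw [hμ, mulVec_smul, hw]
    rw [mulVec_mulVec, hmul, ← mulVec_mulVec] at h1
    exact h1
  have hka : ∀ k, w k ≠ 0 → c k = μ := by
    intro k hk
    have h2 := congrFun hDw k
    rw [mulVec_diagonal] at h2
    have h3 : c k * w k = μ * w k := h2
    exact mul_right_cancel₀ hk h3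
  obtain ⟨k₀, hk₀⟩ : ∃ k, w k ≠ 0 := by
    by_contra hcon; push_neg at hcon; exact hw0 (funext hcon)
  refine ⟨hv0, d k₀, ?_⟩
  have hDbw : Matrix.diagonal d *ᵥ w = d k₀ • w := by
    funext k
    rw [mulVec_diagonal]
    show d k * w k = d k₀ * w k
    by_cases hk : w k = 0
    · rw [hk]; ring
    · rw [h k k₀ ((hka k hk).trans (hka k₀ hk₀).symm)]
  have hstep : B *ᵥ v = Qᵀ *ᵥ (Matrix.diagonal d *ᵥ w) := by
    rw [hB, ← mulVec_mulVec, ← mulVec_mulVec, ← hw]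
  rw [hstep, hDbw, mulVec_smul, hwv]

end BicoaxialAux

open BicoaxialAux in
/-- An isotropic tensor function Φ : M → Sym(n) is bi-coaxial
iff, for every X ∈ M and every simultaneous diagonalization
X = Qᵀ diag(a) Q, Φ(X) = Qᵀ diag(b) Q (so that bᵢ is the eigenvalue of Φ(X)
corresponding to the eigenvalue aᵢ of X), we have aᵢ ≠ aⱼ ⟹ bᵢ ≠ bⱼ. -/
theorem isotropic_bicoaxial_iff {n : ℕ}
    (M : Set (Matrix (Fin n) (Fin n) ℝ))
    (hMsym : ∀ X ∈ M, X.IsSymm)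
    (hMiso : ∀ X ∈ M, ∀ Q : Matrix (Fin n) (Fin n) ℝ, IsOrthogonal Q →
      Qᵀ * X * Q ∈ M)
    (Φ : Matrix (Fin n) (Fin n) ℝ → Matrix (Fin n) (Fin n) ℝ)
    (hΦsym : ∀ X ∈ M, (Φ X).IsSymm)
    (hΦiso : ∀ X ∈ M, ∀ Q : Matrix (Fin n) (Fin n) ℝ, IsOrthogonal Q →
      Φ (Qᵀ * X * Q) = Qᵀ * Φ X * Q) :
    (∀ X ∈ M, Coaxial X (Φ X) ∧ Coaxial (Φ X) X) ↔
    (∀ X ∈ M, ∀ Q : Matrix (Fin n) (Fin n) ℝ, IsOrthogonal Q →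
      ∀ a b : Fin n → ℝ,
        X = Qᵀ * Matrix.diagonal a * Q → Φ X = Qᵀ * Matrix.diagonal b * Q →
          ∀ i j : Fin n, a i ≠ a j → b i ≠ b j) := by
  -- Key fact (from isotropy alone): in any simultaneous diagonalization,
  -- a i = a j implies b i = b j.
  have key : ∀ X ∈ M, ∀ Q : Matrix (Fin n) (Fin n) ℝ, IsOrthogonal Q →
      ∀ a b : Fin n → ℝ,
        X = Qᵀ * Matrix.diagonal a * Q → Φ X = Qᵀ * Matrix.diagonal b * Q →
          ∀ i j : Fin n, a i = a j → b i = b j := by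
    intro X hX Q hQ a b hXa hXb i j hij
    have hQT := isOrth_transpose hQ
    have hdA : Qᵀᵀ * X * Qᵀ = Matrix.diagonal a := by
      rw [transpose_transpose, hXa]; exact sandwich hQ _
    have hMem : Matrix.diagonal a ∈ M := by
      have := hMiso X hX Qᵀ hQT; rwa [hdA] at this
    have hPhiDa : Φ (Matrix.diagonal a) = Matrix.diagonal b := by
      have h1 := hΦiso X hX Qᵀ hQT
      rw [hdA, transpose_transpose, hXb, sandwich hQ] at h1
      exact h1
    have h2 := hΦiso _ hMem _ (swap_orth i j)
    rw [swap_diag i j a hij, hPhiDa, swap_conj] at h2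
    have h3 := congrFun (congrFun h2 i) i
    simpa using h3
  constructor
  · -- bi-coaxial ⟹ eigenvalue separation
    intro hco X hX Q hQ a b hXa hXb i j hab hbij
    have hij : i ≠ j := by rintro rfl; exact hab rfl
    set u : Fin n → ℝ := Pi.single i 1 + Pi.single j 1 with hu
    have hui : u i = 1 := by simp [hu, Pi.single_apply, hij]
    have huj : u j = 1 := by simp [hu, Pi.single_apply, Ne.symm hij]
    set v := Qᵀ *ᵥ u with hv
    have hQv : Q *ᵥ v = u := by rw [hv, mulVec_mulVec, hQ.1, one_mulVec]
    have hv0 : v ≠ 0 := by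
      intro hz
      rw [hz, mulVec_zero] at hQv
      have h0 : (0 : Fin n → ℝ) i = u i := congrFun hQv i
      rw [hui] at h0
      exact one_ne_zero h0.symm
    have hbu : Matrix.diagonal b *ᵥ u = b i • u := by
      funext k
      rw [mulVec_diagonal]
      show b k * u k = b i * u k
      by_cases hk1 : k = i
      · rw [hk1]
      by_cases hk2 : k = j
      · rw [hk2, hbij]
      · have : u k = 0 := by simp [hu, Pi.single_apply, hk1, hk2]
        rw [this]; ring
    have hPhiv : Φ X *ᵥ v = b i • v := by
      calc Φ X *ᵥ v = (Qᵀ * Matrix.diagonal b) *ᵥ (Q *ᵥ v) := by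
            rw [hXb, ← mulVec_mulVec]
      _ = (Qᵀ * Matrix.diagonal b) *ᵥ u := by rw [hQv]
      _ = Qᵀ *ᵥ (Matrix.diagonal b *ᵥ u) := by rw [mulVec_mulVec]
      _ = b i • v := by rw [hbu, mulVec_smul, ← hv]
    obtain ⟨-, μ, hμ⟩ := (hco X hX).2 v ⟨hv0, b i, hPhiv⟩
    have hau : Matrix.diagonal a *ᵥ u = μ • u := by
      have h1 : Q *ᵥ (X *ᵥ v) = μ • u := by rw [hμ, mulVec_smul, hQv]
      have h2 : X *ᵥ v = (Qᵀ * Matrix.diagonal a) *ᵥ u := by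
        rw [hXa, ← mulVec_mulVec, hQv]
      rw [h2, mulVec_mulVec] at h1
      have h3 : Q * (Qᵀ * Matrix.diagonal a) = Matrix.diagonal a := by
        calc Q * (Qᵀ * Matrix.diagonal a) = (Q * Qᵀ) * Matrix.diagonal a := by noncomm_ring
        _ = Matrix.diagonal a := by rw [hQ.1, one_mul]
      rw [h3] at h1
      exact h1
    have hi : a i = μ := by
      have h := congrFun hau i
      simp only [mulVec_diagonal, Pi.smul_apply, smul_eq_mul, hui, mul_one] at h
      exact h
    have hj : a j = μ := by
      have h := congrFun hau j
      simp only [mulVec_diagonal, Pi.smul_apply, smul_eq_mul, huj, mul_one] at h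
      exact h
    exact hab (hi.trans hj.symm)
  · -- eigenvalue separation ⟹ bi-coaxial
    intro hyp X hX
    obtain ⟨Q, a, hQ, hXa⟩ := spectral (hMsym X hX)
    have hQT := isOrth_transpose hQ
    have hdA : Qᵀᵀ * X * Qᵀ = Matrix.diagonal a := by
      rw [transpose_transpose, hXa]; exact sandwich hQ _
    have hMem : Matrix.diagonal a ∈ M := by
      have := hMiso X hX Qᵀ hQT; rwa [hdA] at this
    have hC := hΦiso X hX Qᵀ hQT
    rw [hdA, transpose_transpose] at hC
    -- hC : Φ (diagonal a) = Q * Φ X * Qᵀ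
    have hsign : ∀ i, (signM i)ᵀ * Φ (Matrix.diagonal a) * signM i = Φ (Matrix.diagonal a) := by
      intro i
      have h := hΦiso _ hMem _ (signM_orth i)
      rw [signM_conj_diag] at h
      exact h.symm
    set b : Fin n → ℝ := fun k => Φ (Matrix.diagonal a) k k with hb
    have hdiagb : Φ (Matrix.diagonal a) = Matrix.diagonal b := diag_of_sign_conj _ hsign
    have hXb : Φ X = Qᵀ * Matrix.diagonal b * Q := by
      rw [← hdiagb, hC, sandwich' hQ]
    constructor
    · exact coax_of_diag hQ hXa hXb (fun k l => key X hX Q hQ a b hXa hXb k l)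
    · refine coax_of_diag hQ hXb hXa (fun k l hbkl => ?_)
      by_contra hakl
      exact hyp X hX Q hQ a b hXa hXb k l hakl hbkl
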